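/- Let $\mathcal{A}$ be a $k$-linear Grothendieck abelian category with a family $\{I_\lambda\}_{\lambda \in \Lambda}$ of nonzero objects and a function $|\cdot| \colon \Lambda \to \mathbb{Z}_{\ge 0}$ satisfying axioms (A1)-(A8) (listed in context). Define $L_\lambda$ to be the intersection of the kernels of all morphisms $I_\lambda \to I_\mu$ with $|\mu| < |\lambda|$. Then $L_\lambda$ is a simple object and equals the socle of $I_\lambda$. -/

import Mathlib

open CategoryTheory CategoryTheory.Limits

universe v u

/-- An object is finitely generated if whenever it is the supremum of a directed family of
subobjects, it equals one of them. -/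
def FinGenObj {C : Type u} [Category.{v} C] [Abelian C] [WellPowered.{v} C] [HasLimits C]
    [HasColimits C] (X : C) : Prop :=
  ∀ S : Set (Subobject X), S.Nonempty → DirectedOn (· ≤ ·) S → Subobject.sSup.{v} S = ⊤ → ⊤ ∈ S

set_option linter.unusedSectionVars false

section Aux

variable {C : Type u} [Category.{v} C] [Abelian C] [WellPowered.{v} C]
    [HasLimits C] [HasColimits C]

lemma arrow_comp_eq_zero_of_le_kernel {X Y : C} {f : X ⟶ Y} {P : Subobject X}
    (h : P ≤ kernelSubobject f) : P.arrow ≫ f = 0 := by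
  rw [← Subobject.ofLE_arrow h, Category.assoc, kernelSubobject_arrow_comp, comp_zero]

lemma subobject_arrow_ne_zero {X : C} {P : Subobject X} (h : P ≠ ⊥) : P.arrow ≠ 0 := by
  intro h0
  apply h
  rw [← Subobject.mk_arrow P]
  exact Subobject.mk_eq_bot_iff_zero.mpr h0

lemma not_isZero_of_ne_bot {X : C} {P : Subobject X} (h : P ≠ ⊥) : ¬ IsZero (P : C) := by
  intro hz
  exact subobject_arrow_ne_zero h (hz.eq_of_src _ _)

lemma eq_zero_of_kernel_eq_top {X Y : C} {f : X ⟶ Y}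
    (h : kernelSubobject f = ⊤) : f = 0 := by
  have hiso : IsIso (kernelSubobject f).arrow :=
    (Subobject.isIso_arrow_iff_eq_top _).mpr h
  have h0 : (kernelSubobject f).arrow ≫ f = 0 := kernelSubobject_arrow_comp f
  calc f = inv (kernelSubobject f).arrow ≫ ((kernelSubobject f).arrow ≫ f) := by
          rw [← Category.assoc, IsIso.inv_hom_id, Category.id_comp]
    _ = 0 := by rw [h0, comp_zero]

/-- the preimage of a subobject along a morphism, realized as a kernel. -/
noncomputable def pbSub {X Y : C} (π : X ⟶ Y) (P : Subobject Y) : Subobject X :=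
  kernelSubobject (π ≫ cokernel.π P.arrow)

lemma pbSub_arrow_comp {X Y : C} (π : X ⟶ Y) (P : Subobject Y) :
    (pbSub π P).arrow ≫ π ≫ cokernel.π P.arrow = 0 :=
  kernelSubobject_arrow_comp _

/-- the induced morphism from the preimage to the subobject. -/
noncomputable def pbSubT {X Y : C} (π : X ⟶ Y) (P : Subobject Y) :
    ((pbSub π P : C) ⟶ (P : C)) :=
  Abelian.monoLift P.arrow ((pbSub π P).arrow ≫ π)
    (by rw [Category.assoc]; exact pbSub_arrow_comp π P)

lemma pbSubT_comp {X Y : C} (π : X ⟶ Y) (P : Subobject Y) :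
    pbSubT π P ≫ P.arrow = (pbSub π P).arrow ≫ π :=
  Abelian.monoLift_comp _ _ _

lemma pbSub_mono {X Y : C} (π : X ⟶ Y) {P P' : Subobject Y} (h : P ≤ P') :
    pbSub π P ≤ pbSub π P' := by
  apply le_kernelSubobject
  have h1 : P.arrow ≫ cokernel.π P'.arrow = 0 := by
    rw [← Subobject.ofLE_arrow h, Category.assoc, cokernel.condition, comp_zero]
  rw [← Category.assoc, ← pbSubT_comp, Category.assoc, h1, comp_zero]

lemma ker_le_pbSub {X Y : C} (π : X ⟶ Y) (P : Subobject Y) :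
    kernelSubobject π ≤ pbSub π P := by
  apply le_kernelSubobject
  rw [← Category.assoc, kernelSubobject_arrow_comp, zero_comp]

lemma pbSubT_epi {X Y : C} (π : X ⟶ Y) [Epi π] (P : Subobject Y) : Epi (pbSubT π P) := by
  have hs : IsLimit (PullbackCone.mk (pbSub π P).arrow (pbSubT π P) (pbSubT_comp π P).symm) := by
    refine PullbackCone.IsLimit.mk _
      (fun c => factorThruKernelSubobject (π ≫ cokernel.π P.arrow) c.fst
        (by rw [← Category.assoc, c.condition, Category.assoc, cokernel.condition, comp_zero]))
      (fun c => ?_) (fun c => ?_) (fun c m hm1 _ => ?_)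
    · beta_reduce
      apply factorThruKernelSubobject_comp_arrow
    · beta_reduce
      refine (cancel_mono P.arrow).mp ?_
      exact (Category.assoc _ _ _).trans ((congrArg _ (pbSubT_comp π P)).trans
        ((Category.assoc _ _ _).symm.trans ((congrArg (· ≫ π)
          (factorThruKernelSubobject_comp_arrow _ _ _)).trans c.condition)))
    · beta_reduce
      refine (cancel_mono (pbSub π P).arrow).mp ?_
      rw [hm1]
      unfold pbSub
      rw [factorThruKernelSubobject_comp_arrow]
  exact Abelian.epi_snd_of_isLimit _ _ hs

lemma eq_top_of_ker_le_of_epi {X Y : C} (π : X ⟶ Y) [Epi π] (W : Subobject X)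
    (hk : kernelSubobject π ≤ W) (he : Epi (W.arrow ≫ π)) : W = ⊤ := by
  have harr : (kernelSubobject π).arrow ≫ cokernel.π W.arrow = 0 := by
    rw [← Subobject.ofLE_arrow hk, Category.assoc, cokernel.condition, comp_zero]
  have hc0 : kernel.ι π ≫ cokernel.π W.arrow = 0 := by
    rw [← kernelSubobject_arrow', Category.assoc, harr, comp_zero]
  have hπh : π ≫ Abelian.epiDesc π (cokernel.π W.arrow) hc0 = cokernel.π W.arrow :=
    Abelian.comp_epiDesc _ _ _
  have h1 : (W.arrow ≫ π) ≫ Abelian.epiDesc π (cokernel.π W.arrow) hc0 = 0 := by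
    rw [Category.assoc, hπh, cokernel.condition]
  have h0 : Abelian.epiDesc π (cokernel.π W.arrow) hc0 = 0 :=
    (Preadditive.epi_iff_cancel_zero _).mp he _ _ h1
  have hcz : cokernel.π W.arrow = 0 := by rw [← hπh, h0, comp_zero]
  have hepi : Epi W.arrow := Preadditive.epi_of_cokernel_zero hcz
  have hiso : IsIso W.arrow := isIso_of_mono_of_epi _
  exact (Subobject.isIso_arrow_iff_eq_top W).mp hiso

lemma finGen_of_epi {X Y : C} (π : X ⟶ Y) [Epi π] (hX : FinGenObj X) : FinGenObj Y := by
  intro S hne hdir hsup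
  set T : Set (Subobject X) := pbSub π '' S with hT
  have hTne : T.Nonempty := hne.image _
  have hTdir : DirectedOn (· ≤ ·) T := by
    rintro _ ⟨P, hP, rfl⟩ _ ⟨P', hP', rfl⟩
    obtain ⟨R, hR, h1, h2⟩ := hdir P hP P' hP'
    exact ⟨pbSub π R, ⟨R, hR, rfl⟩, pbSub_mono π h1, pbSub_mono π h2⟩
  have hTsup : Subobject.sSup.{v} T = ⊤ := by
    apply eq_top_of_ker_le_of_epi π
    · obtain ⟨P0, hP0⟩ := hne
      exact le_trans (ker_le_pbSub π P0) (Subobject.le_sSup _ _ ⟨P0, hP0, rfl⟩)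
    · rw [Preadditive.epi_iff_cancel_zero]
      intro Z c hc
      have hker : ∀ P ∈ S, P ≤ kernelSubobject c := by
        intro P hP
        apply le_kernelSubobject
        have hle : pbSub π P ≤ Subobject.sSup.{v} T := Subobject.le_sSup _ _ ⟨P, hP, rfl⟩
        have h1 : (pbSub π P).arrow ≫ π ≫ c = 0 := by
          rw [← Subobject.ofLE_arrow hle, Category.assoc, ← Category.assoc (Subobject.sSup.{v} T).arrow π c,
            hc, comp_zero]
        have h2 : pbSubT π P ≫ P.arrow ≫ c = 0 := by
          rw [← Category.assoc, pbSubT_comp, Category.assoc, h1]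
        have := pbSubT_epi π P
        exact (Preadditive.epi_iff_cancel_zero _).mp this _ _ h2
      have htop : kernelSubobject c = ⊤ :=
        top_le_iff.mp (hsup ▸ Subobject.sSup_le _ _ hker)
      exact eq_zero_of_kernel_eq_top htop
  obtain ⟨P, hPS, hPtop⟩ := hX T hTne hTdir hTsup
  have h1 : IsIso (pbSub π P).arrow := (Subobject.isIso_arrow_iff_eq_top _).mpr hPtop
  have h2 : π ≫ cokernel.π P.arrow = 0 := by
    have := pbSub_arrow_comp π P
    calc π ≫ cokernel.π P.arrow
        = inv (pbSub π P).arrow ≫ ((pbSub π P).arrow ≫ π ≫ cokernel.π P.arrow) := by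
          rw [← Category.assoc, ← Category.assoc, IsIso.inv_hom_id, Category.id_comp]
      _ = 0 := by rw [this, comp_zero]
  have h3 : cokernel.π P.arrow = 0 := by
    have := (Preadditive.epi_iff_cancel_zero π).mp inferInstance _ _ h2
    exact this
  have hepi : Epi P.arrow := Preadditive.epi_of_cokernel_zero h3
  have hiso : IsIso P.arrow := isIso_of_mono_of_epi _
  have : P = ⊤ := (Subobject.isIso_arrow_iff_eq_top P).mp hiso
  rwa [this] at hPS

lemma ker_coker_le {X : C} (M : Subobject X) :
    kernelSubobject (cokernel.π M.arrow) ≤ M :=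
  Subobject.le_of_comm
    (Abelian.monoLift M.arrow (kernelSubobject (cokernel.π M.arrow)).arrow
      (kernelSubobject_arrow_comp _))
    (Abelian.monoLift_comp _ _ _)

end Aux

/-- The subobject `L_λ ⊆ I_λ`: the intersection of the kernels of all maps
`I_λ → I_μ` with `|μ| < |λ|`. -/
noncomputable def Lsub {C : Type u} [Category.{v} C] [Abelian C] [WellPowered.{v} C]
    [HasLimits C] [HasColimits C] {Λ : Type*} (I : Λ → C) (size : Λ → ℕ) (l : Λ) :
    Subobject (I l) :=
  Subobject.sInf.{v} {P : Subobject (I l) |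
    ∃ (m : Λ) (f : I l ⟶ I m), size m < size l ∧ P = kernelSubobject f}

section Main

variable {C : Type u} [Category.{v} C] [Abelian C] [HasLimits C] [HasColimits C]
    [WellPowered.{v} C] {Λ : Type v} (I : Λ → C) (size : Λ → ℕ)

lemma claimB
    (A3 : ∀ l, FinGenObj (I l))
    (A5 : ∀ l, ∀ f : CategoryTheory.End (I l), f ≠ 0 → IsUnit f)
    (A6 : ∀ l m, ∀ f : I l ⟶ I m, f ≠ 0 → size m < size l ∨ l = m)
    (A8 : ∀ X : C, FinGenObj X → ∃ (ι : Type v) (_ : Fintype ι) (m : ι → Λ)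
      (f : X ⟶ ∐ (fun i => I (m i))), Mono f)
    (l : Λ) (M : Subobject (I l)) (hM : M ≠ ⊥) : Lsub I size l ≤ M := by
  classical
  haveI : HasFiniteBiproducts C := Abelian.hasFiniteBiproducts
  have hQ : FinGenObj (cokernel M.arrow) := finGen_of_epi (cokernel.π M.arrow) (A3 l)
  obtain ⟨ι, hfin, m, ψ, hmono⟩ := A8 _ hQ
  haveI := hfin
  haveI := hmono
  set e := biproduct.isoCoproduct (fun i => I (m i)) with he
  set g : I l ⟶ ⨁ (fun i => I (m i)) := cokernel.π M.arrow ≫ ψ ≫ e.inv with hg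
  by_cases hc : ∃ (i : ι) (him : m i = l),
      g ≫ biproduct.π (fun i => I (m i)) i ≫ eqToHom (congrArg I him) ≠ 0
  · exfalso
    obtain ⟨i, him, hne⟩ := hc
    obtain ⟨w, hw⟩ := A5 l _ hne
    have h1 : (g ≫ biproduct.π (fun i => I (m i)) i ≫ eqToHom (congrArg I him)) ≫
        (↑w⁻¹ : CategoryTheory.End (I l)) = 𝟙 (I l) := by
      rw [← hw]; exact w.inv_mul
    have h2 : cokernel.π M.arrow ≫
        (ψ ≫ e.inv ≫ biproduct.π (fun i => I (m i)) i ≫ eqToHom (congrArg I him)) =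
        g ≫ biproduct.π (fun i => I (m i)) i ≫ eqToHom (congrArg I him) := by
      rw [hg]; simp only [Category.assoc]
    have h3 : cokernel.π M.arrow ≫
        ((ψ ≫ e.inv ≫ biproduct.π (fun i => I (m i)) i ≫ eqToHom (congrArg I him)) ≫
          (↑w⁻¹ : CategoryTheory.End (I l))) = 𝟙 (I l) := by
      rw [← Category.assoc, h2]; exact h1
    haveI : IsSplitMono (cokernel.π M.arrow) := IsSplitMono.mk' ⟨_, h3⟩
    have h4 : M.arrow = 0 := zero_of_comp_mono _ (cokernel.condition M.arrow)
    exact hM (by rw [← Subobject.mk_arrow M]; exact Subobject.mk_eq_bot_iff_zero.mpr h4)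
  · push_neg at hc
    refine le_trans (le_kernelSubobject _ _ ?_) (ker_coker_le M)
    have h0 : (Lsub I size l).arrow ≫ g = 0 := by
      apply biproduct.hom_ext
      intro j
      rw [zero_comp, Category.assoc]
      by_cases hjl : m j = l
      · have h4 := congrArg (fun z => z ≫ eqToHom (congrArg I hjl.symm)) (hc j hjl)
        simp only [Category.assoc, eqToHom_trans, eqToHom_refl, Category.comp_id,
          zero_comp] at h4
        rw [h4, comp_zero]
      · by_cases hz : g ≫ biproduct.π (fun i => I (m i)) j = 0
        · rw [hz, comp_zero]
        · have hsm : size (m j) < size l := by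
            rcases A6 l (m j) _ hz with h | h
            · exact h
            · exact absurd h.symm hjl
          have hle : Lsub I size l ≤ kernelSubobject (g ≫ biproduct.π (fun i => I (m i)) j) :=
            Subobject.sInf_le _ _ ⟨m j, _, hsm, rfl⟩
          exact arrow_comp_eq_zero_of_le_kernel hle
    have key : ((Lsub I size l).arrow ≫ cokernel.π M.arrow) ≫ ψ ≫ e.inv =
        (Lsub I size l).arrow ≫ g := by
      rw [hg]; simp only [Category.assoc]
    refine (cancel_mono (ψ ≫ e.inv)).mp ?_
    rw [zero_comp, key, h0]

lemma Lsub_ne_bot {k : Type*} [Field k] [CategoryTheory.Linear k C]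
    (A2 : ∀ n : ℕ, {l : Λ | size l ≤ n}.Finite)
    (A4 : ∀ l m, FiniteDimensional k (I l ⟶ I m))
    (A7 : ∀ (l : Λ) (ι : Type v) (m : ι → Λ), (∀ i, size (m i) < size l) →
      ∀ f : I l ⟶ ∐ (fun i => I (m i)), ¬ Mono f)
    (l : Λ) : Lsub I size l ≠ ⊥ := by
  classical
  haveI : HasFiniteBiproducts C := Abelian.hasFiniteBiproducts
  intro hbot
  have hfin : {m : Λ | size m < size l}.Finite :=
    (A2 (size l)).subset (fun m hm => le_of_lt (Set.mem_setOf_eq ▸ hm))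
  let bas : ∀ μ : Λ, Module.Basis (Fin (Module.finrank k (I l ⟶ I μ))) k (I l ⟶ I μ) :=
    fun μ => haveI := A4 l μ; Module.finBasis k _
  let ι₀ : Type v := Σ μ : {x : Λ // x ∈ hfin.toFinset}, Fin (Module.finrank k (I l ⟶ I μ.1))
  let F : I l ⟶ ⨁ (fun i : ι₀ => I i.1.1) := biproduct.lift (fun i => bas i.1.1 i.2)
  have hkerle : kernelSubobject F ≤ Lsub I size l := by
    apply Subobject.le_sInf
    rintro P ⟨μ, f, hμ, rfl⟩
    haveI := A4 l μ
    have hmem : μ ∈ hfin.toFinset := hfin.mem_toFinset.mpr hμ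
    apply le_kernelSubobject
    have hba : ∀ j, (kernelSubobject F).arrow ≫ bas μ j = 0 := by
      intro j
      have hb : F ≫ biproduct.π (fun i : ι₀ => I i.1.1) ⟨⟨μ, hmem⟩, j⟩ = bas μ j :=
        biproduct.lift_π _ _
      rw [← hb, ← Category.assoc, kernelSubobject_arrow_comp, zero_comp]
    have hker : ⊤ ≤ LinearMap.ker (Linear.leftComp k (I μ) (kernelSubobject F).arrow) := by
      rw [← (bas μ).span_eq, Submodule.span_le]
      rintro x ⟨j, rfl⟩
      exact hba j
    exact LinearMap.mem_ker.mp (hker Submodule.mem_top)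
  rw [hbot] at hkerle
  have hker0 : kernelSubobject F = ⊥ := le_bot_iff.mp hkerle
  have hι : kernel.ι F = 0 := Subobject.mk_eq_bot_iff_zero.mp hker0
  haveI : Mono F := Preadditive.mono_of_kernel_zero hι
  have hmono : Mono (F ≫ (biproduct.isoCoproduct (fun i : ι₀ => I i.1.1)).hom) :=
    mono_comp _ _
  exact A7 l ι₀ (fun i => i.1.1) (fun i => hfin.mem_toFinset.mp i.1.2) _ hmono

end Main

/-- Under axioms (A1)–(A8), the object `L_λ` is simple and equals the socle
(the supremum of the simple subobjects) of `I_λ`. -/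
theorem stmt_9 {k : Type*} [Field k] {C : Type u} [Category.{v} C] [Abelian C]
    [Linear k C] [HasLimits C] [HasColimits C] [AB5 C] [WellPowered.{v} C]
    (Gsep : C) (hsep : IsSeparator Gsep)
    {Λ : Type v} (I : Λ → C) (size : Λ → ℕ)
    (hnz : ∀ l, ¬ IsZero (I l))
    (A1 : ∀ X : C, Subobject.sSup.{v} {P : Subobject X | FinGenObj (P : C)} = ⊤)
    (A2 : ∀ n : ℕ, {l : Λ | size l ≤ n}.Finite)
    (A3 : ∀ l, FinGenObj (I l))
    (A4 : ∀ l m, FiniteDimensional k (I l ⟶ I m))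
    (A5 : ∀ l, ∀ f : CategoryTheory.End (I l), f ≠ 0 → IsUnit f)
    (A6 : ∀ l m, ∀ f : I l ⟶ I m, f ≠ 0 → size m < size l ∨ l = m)
    (A7 : ∀ (l : Λ) (ι : Type v) (m : ι → Λ), (∀ i, size (m i) < size l) →
      ∀ f : I l ⟶ ∐ (fun i => I (m i)), ¬ Mono f)
    (A8 : ∀ X : C, FinGenObj X → ∃ (ι : Type v) (_ : Fintype ι) (m : ι → Λ)
      (f : X ⟶ ∐ (fun i => I (m i))), Mono f)
    (l : Λ) :
    Simple ((Lsub I size l : C)) ∧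
      Lsub I size l = Subobject.sSup.{v} {P : Subobject (I l) | Simple (P : C)} := by
  classical
  have hLbot : Lsub I size l ≠ ⊥ := Lsub_ne_bot I size A2 A4 A7 l
  have hB : ∀ M : Subobject (I l), M ≠ ⊥ → Lsub I size l ≤ M :=
    fun M hM => claimB I size A3 A5 A6 A8 l M hM
  have hLnz : ¬ IsZero ((Lsub I size l : C)) := not_isZero_of_ne_bot hLbot
  have hsimple : Simple ((Lsub I size l : C)) := by
    constructor
    intro Y f hf
    constructor
    · intro hiso h0
      apply hLnz
      haveI he : Epi (0 : Y ⟶ (Lsub I size l : C)) := by rw [← h0]; infer_instance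
      exact IsZero.of_epi_zero Y _
    · intro hf0
      have hfa : f ≫ (Lsub I size l).arrow ≠ 0 := by
        intro h
        apply hf0
        apply (cancel_mono (Lsub I size l).arrow).mp
        rw [h, zero_comp]
      haveI : Mono (f ≫ (Lsub I size l).arrow) := mono_comp _ _
      have hMbot : Subobject.mk (f ≫ (Lsub I size l).arrow) ≠ ⊥ :=
        fun h => hfa (Subobject.mk_eq_bot_iff_zero.mp h)
      have hLM : Lsub I size l ≤ Subobject.mk (f ≫ (Lsub I size l).arrow) := hB _ hMbot
      have htf : (Subobject.ofLE _ _ hLM ≫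
            (Subobject.underlyingIso (f ≫ (Lsub I size l).arrow)).hom) ≫
            (f ≫ (Lsub I size l).arrow) = (Lsub I size l).arrow := by
        rw [Category.assoc, Subobject.underlyingIso_hom_comp_eq_mk, Subobject.ofLE_arrow]
      have htf1 : (Subobject.ofLE _ _ hLM ≫
            (Subobject.underlyingIso (f ≫ (Lsub I size l).arrow)).hom) ≫ f = 𝟙 _ := by
        refine (cancel_mono (Lsub I size l).arrow).mp ?_
        rw [Category.id_comp, Category.assoc]
        exact htf
      haveI : IsSplitEpi f := IsSplitEpi.mk' ⟨_, htf1⟩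
      exact isIso_of_mono_of_epi f
  refine ⟨hsimple, ?_⟩
  apply le_antisymm
  · exact Subobject.le_sSup _ _ hsimple
  · apply Subobject.sSup_le
    rintro P hP
    haveI : Simple ((P : C)) := hP
    have hPbot : P ≠ ⊥ := by
      intro h
      have hz : IsZero ((P : C)) := by
        rw [h]; exact (isZero_zero C).of_iso Subobject.botCoeIsoZero
      exact ((Simple.mono_isIso_iff_nonzero
        (𝟙 ((P : C)))).mp inferInstance) (hz.eq_of_src _ _)
    have hLP : Lsub I size l ≤ P := hB P hPbot
    have htz : Subobject.ofLE _ _ hLP ≠ 0 := by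
      intro h
      apply subobject_arrow_ne_zero hLbot
      rw [← Subobject.ofLE_arrow hLP, h, zero_comp]
    have hiso : IsIso (Subobject.ofLE _ _ hLP) :=
      (Simple.mono_isIso_iff_nonzero _).mpr htz
    refine le_antisymm ?_ hLP |>.le.trans (le_refl _)
    exact Subobject.le_of_comm (inv (Subobject.ofLE _ _ hLP))
      (by rw [IsIso.inv_comp_eq, Subobject.ofLE_arrow])
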